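/- Let (Ω, F, P) be a probability space with a filtration (F_k)_{k≥0}, and let (h_k)_{k≥0} be a sequence of nonnegative real random variables adapted to the filtration, with h₀ a deterministic constant. Assume there is r ∈ (0,1) such that E[h_{k+1} | F_k] ≤ (1 − r)·h_k almost surely for every k ≥ 0. Then for every θ ∈ (0, r) and every ξ ∈ (0,1), with probability at least 1 − ξ one has h_k ≤ (h₀/ξ)·(1 − θ)^k simultaneously for all k ≥ 0. -/

import Mathlib

open MeasureTheory

/-- Ville-type maximal inequality for a nonnegative supermartingale (finite horizon). -/
lemma supermartingale_maximal_aux {Ω : Type*} [m0 : MeasurableSpace Ω] {μ : Measure Ω}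
    [IsProbabilityMeasure μ] {ℱ : Filtration ℕ m0} {g : ℕ → Ω → ℝ}
    (hg : Supermartingale g ℱ μ) (hgnn : ∀ k ω, 0 ≤ g k ω)
    {ε : ℝ} (hε : 0 < ε) (n : ℕ) :
    μ {ω | ∃ k ≤ n, ε ≤ g k ω} ≤ ENNReal.ofReal ((∫ ω, g 0 ω ∂μ) / ε) := by
  set τ : Ω → WithTop ℕ := fun ω => ((hittingBtwn g (Set.Ici ε) 0 n ω : ℕ) : WithTop ℕ) with hτdef
  have hτ : IsStoppingTime ℱ τ :=
    Adapted.isStoppingTime_hittingBtwn hg.stronglyAdapted.adapted measurableSet_Ici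
  have hτle : ∀ ω, τ ω ≤ n := fun ω => WithTop.coe_le_coe.2 (hittingBtwn_le ω)
  have hintst : Integrable (stoppedValue g τ) μ :=
    integrable_stoppedValue ℕ hτ hg.integrable hτle
  set B := {ω | ∃ k ≤ n, ε ≤ g k ω} with hBdef
  have hBmeas : MeasurableSet B := by
    have hBeq : B = ⋃ k ≤ n, {ω | ε ≤ g k ω} := by
      ext ω; simp [hBdef]
    rw [hBeq]
    exact MeasurableSet.biUnion (Set.to_countable _) fun k _ =>
      measurableSet_le measurable_const ((hg.stronglyMeasurable k).measurable.le (ℱ.le k))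
  have hstop_val : ∀ ω ∈ B, ε ≤ stoppedValue g τ ω := by
    intro ω hω
    refine stoppedValue_hittingBtwn_mem ?_
    obtain ⟨k, hk, hk'⟩ := hω
    exact ⟨k, ⟨Nat.zero_le _, hk⟩, hk'⟩
  have h1 : ε * (μ B).toReal ≤ ∫ ω in B, stoppedValue g τ ω ∂μ :=
    setIntegral_ge_of_const_le_real hBmeas (measure_ne_top _ _) hstop_val hintst.integrableOn
  have h2 : ∫ ω in B, stoppedValue g τ ω ∂μ ≤ ∫ ω, stoppedValue g τ ω ∂μ :=
    setIntegral_le_integral hintst (ae_of_all _ fun ω => hgnn _ ω)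
  have h3 : ∫ ω, stoppedValue g τ ω ∂μ ≤ ∫ ω, g 0 ω ∂μ := by
    have : ∫ ω, stoppedValue (-g) (fun _ => ((0 : ℕ) : WithTop ℕ)) ω ∂μ ≤
        ∫ ω, stoppedValue (-g) τ ω ∂μ := hg.neg.expected_stoppedValue_mono (isStoppingTime_const ℱ 0) hτ
      (fun ω => WithTop.coe_le_coe.2 (Nat.zero_le _)) hτle
    have e1 : stoppedValue (-g) (fun _ => ((0 : ℕ) : WithTop ℕ)) = fun ω => -(g 0 ω) := rfl
    have e2 : stoppedValue (-g) τ = fun ω => -(stoppedValue g τ ω) := rfl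
    rw [e1, e2, integral_neg, integral_neg] at this
    linarith
  have h4 : ε * (μ B).toReal ≤ ∫ ω, g 0 ω ∂μ := le_trans h1 (le_trans h2 h3)
  have h5 : (μ B).toReal ≤ (∫ ω, g 0 ω ∂μ) / ε := by
    rw [le_div_iff₀ hε]; linarith
  calc μ B = ENNReal.ofReal ((μ B).toReal) := (ENNReal.ofReal_toReal (measure_ne_top _ _)).symm
    _ ≤ ENNReal.ofReal ((∫ ω, g 0 ω ∂μ) / ε) := ENNReal.ofReal_le_ofReal h5

/-- High-probability geometric convergence: if `(h_k)` is nonnegative, adapted,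
integrable, `h₀ ≡ c₀` is a deterministic constant, and
`E[h_{k+1} | F_k] ≤ (1 − r) h_k` a.s. for some `r ∈ (0,1)`, then for every
`θ ∈ (0,r)` and `ξ ∈ (0,1)`, with probability at least `1 − ξ`,
`h_k ≤ (h₀/ξ)(1 − θ)^k` simultaneously for all `k ≥ 0`. -/
theorem high_probability_geometric_convergence
    {Ω : Type*} [m0 : MeasurableSpace Ω] (μ : Measure Ω) [IsProbabilityMeasure μ]
    (ℱ : Filtration ℕ m0) (h : ℕ → Ω → ℝ)
    (hadapt : Adapted ℱ h)
    (hnn : ∀ k ω, 0 ≤ h k ω)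
    (hint : ∀ k, Integrable (h k) μ)
    (c₀ : ℝ) (h₀ : ∀ ω, h 0 ω = c₀)
    (r : ℝ) (hr0 : 0 < r) (hr1 : r < 1)
    (hdec : ∀ k, ∀ᵐ ω ∂μ, (μ[h (k + 1) | ℱ k]) ω ≤ (1 - r) * h k ω) :
    ∀ θ : ℝ, 0 < θ → θ < r → ∀ ξ : ℝ, 0 < ξ → ξ < 1 →
      ENNReal.ofReal (1 - ξ) ≤ μ {ω | ∀ k : ℕ, h k ω ≤ c₀ / ξ * (1 - θ) ^ k} := by
  intro θ hθ0 hθr ξ hξ0 hξ1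
  set a : ℝ := 1 - r with ha_def
  have ha0 : 0 < a := by simp [ha_def]; linarith
  have ha1 : a < 1 := by simp [ha_def]; linarith
  have hane : a ≠ 0 := ne_of_gt ha0
  set g : ℕ → Ω → ℝ := fun k => (a⁻¹ ^ k) • h k with hg_def
  have hg_apply : ∀ k ω, g k ω = a⁻¹ ^ k * h k ω := fun k ω => rfl
  have hgnn : ∀ k ω, 0 ≤ g k ω := fun k ω =>
    mul_nonneg (pow_nonneg (inv_nonneg.2 ha0.le) k) (hnn k ω)
  have hgint : ∀ k, Integrable (g k) μ := fun k => (hint k).smul _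
  have hgadapt : Adapted ℱ g := fun k => (hadapt k).const_smul _
  have hgsuper : Supermartingale g ℱ μ := by
    refine supermartingale_nat hgadapt.stronglyAdapted hgint fun k => ?_
    have hsm := condExp_smul (μ := μ) (m := ℱ k) (a⁻¹ ^ (k + 1)) (h (k + 1))
    filter_upwards [hsm, hdec k] with ω h1 h2
    have h1' : (μ[g (k + 1)|ℱ k]) ω = a⁻¹ ^ (k + 1) * (μ[h (k + 1)|ℱ k]) ω := h1
    rw [h1', hg_apply]
    have hc : 0 ≤ a⁻¹ ^ (k + 1) := pow_nonneg (inv_nonneg.2 ha0.le) _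
    calc a⁻¹ ^ (k + 1) * (μ[h (k + 1)|ℱ k]) ω
        ≤ a⁻¹ ^ (k + 1) * ((1 - r) * h k ω) := by
          exact mul_le_mul_of_nonneg_left h2 hc
      _ = a⁻¹ ^ k * h k ω := by
          rw [pow_succ]
          field_simp [ha_def]
          ring
  have hg0 : ∫ ω, g 0 ω ∂μ = c₀ := by
    have : g 0 = fun _ => c₀ := by
      funext ω; rw [hg_apply]; simp [h₀ ω]
    rw [this, integral_const]; simp
  have hc₀nn : 0 ≤ c₀ := by
    rw [← hg0]
    exact integral_nonneg fun ω => hgnn 0 ω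
  set lam : ℝ := c₀ / ξ with hlam_def
  have hlamnn : 0 ≤ lam := div_nonneg hc₀nn hξ0.le
  -- Bad sets
  set B : Set Ω := {ω | ∃ k, lam < g k ω} with hB_def
  set Bn : ℕ → Set Ω := fun n => {ω | ∃ k ≤ n, lam + 1 / (n + 1) ≤ g k ω} with hBn_def
  have hBn_bound : ∀ n, μ (Bn n) ≤ ENNReal.ofReal ξ := by
    intro n
    have hεpos : (0 : ℝ) < lam + 1 / (n + 1) := by positivity
    have := supermartingale_maximal_aux hgsuper hgnn hεpos n
    rw [hg0] at this
    refine this.trans (ENNReal.ofReal_le_ofReal ?_)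
    rw [div_le_iff₀ hεpos]
    have : lam * ξ = c₀ := by
      rw [hlam_def]; field_simp
    nlinarith [mul_pos hξ0 (show (0:ℝ) < 1 / (n + 1) by positivity)]
  have hBsub : B ⊆ ⋃ n, Bn n := by
    intro ω hω
    obtain ⟨k, hk⟩ := hω
    obtain ⟨m, hm⟩ := exists_nat_one_div_lt (show (0:ℝ) < g k ω - lam by linarith)
    refine Set.mem_iUnion.2 ⟨max k m, k, le_max_left _ _, ?_⟩
    have h1 : (1 : ℝ) / (max k m + 1) ≤ 1 / (m + 1) := by
      apply one_div_le_one_div_of_le (by positivity)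
      have : (m : ℝ) ≤ max k m := by exact_mod_cast le_max_right k m
      linarith
    have : (1 : ℝ) / (m + 1) < g k ω - lam := hm
    linarith
  have hBnmono : Monotone Bn := by
    intro n n' hnn' ω hω
    obtain ⟨k, hk, hk'⟩ := hω
    refine ⟨k, hk.trans hnn', ?_⟩
    have h1 : (1 : ℝ) / (n' + 1) ≤ 1 / (n + 1) := by
      apply one_div_le_one_div_of_le (by positivity)
      exact_mod_cast by omega
    linarith
  have hBbound : μ B ≤ ENNReal.ofReal ξ := by
    refine (measure_mono hBsub).trans ?_
    rw [hBnmono.measure_iUnion]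
    exact iSup_le hBn_bound
  have hBmeas : MeasurableSet B := by
    have : B = ⋃ k, {ω | lam < g k ω} := by ext ω; simp [hB_def]
    rw [this]
    exact MeasurableSet.iUnion fun k =>
      measurableSet_lt measurable_const ((hgadapt k).le (ℱ.le k))
  -- complement of B is contained in the good set
  have hsub : Bᶜ ⊆ {ω | ∀ k : ℕ, h k ω ≤ c₀ / ξ * (1 - θ) ^ k} := by
    intro ω hω k
    have hgle : g k ω ≤ lam := le_of_not_gt fun hc => hω ⟨k, hc⟩
    have hhk : h k ω = a ^ k * g k ω := by
      rw [hg_apply]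
      rw [← mul_assoc, ← mul_pow, mul_inv_cancel₀ hane, one_pow, one_mul]
    rw [hhk]
    have hpow : a ^ k ≤ (1 - θ) ^ k :=
      pow_le_pow_left₀ ha0.le (by simp [ha_def]; linarith) k
    calc a ^ k * g k ω ≤ a ^ k * lam :=
          mul_le_mul_of_nonneg_left hgle (pow_nonneg ha0.le k)
      _ ≤ (1 - θ) ^ k * lam := mul_le_mul_of_nonneg_right hpow hlamnn
      _ = c₀ / ξ * (1 - θ) ^ k := by rw [hlam_def]; ring
  calc ENNReal.ofReal (1 - ξ) = 1 - ENNReal.ofReal ξ := by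
        rw [ENNReal.ofReal_sub 1 hξ0.le, ENNReal.ofReal_one]
    _ ≤ 1 - μ B := tsub_le_tsub_left hBbound 1
    _ = μ Bᶜ := by
        rw [measure_compl hBmeas (measure_ne_top _ _), measure_univ]
    _ ≤ μ {ω | ∀ k : ℕ, h k ω ≤ c₀ / ξ * (1 - θ) ^ k} := measure_mono hsub
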